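/- Define p_{T|n} = (1/(n·pₙ))·∑_{k=0}^{n} k·p_{k,n-k}, with pₙ and p_{m,j} as the STIT I-segment integral formulas. Then lim_{n→∞} p_{T|n} = 2/3. -/

import Mathlib

open MeasureTheory intervalIntegral Set Finset Filter

noncomputable def pTX (m j : ℕ) : ℝ :=
  3 * 2^m * (Nat.choose (m + j) m : ℝ) *
    ∫ a in (0:ℝ)..1, ∫ b in (0:ℝ)..1,
      (1 - a)^3 * a^m * (1 - (1 - a) * (1 - b))^j / (3 - (1 - a) * (2 - b))^(m + j + 1)

noncomputable def p (n : ℕ) : ℝ :=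
  3 * ∫ a in (0:ℝ)..1, ∫ b in (0:ℝ)..1,
    (1 - a)^3 * (3 - (1 - a) * (3 - b))^n / (3 - (1 - a) * (2 - b))^(n + 1)

noncomputable def pTgiven (n : ℕ) : ℝ :=
  (1 / ((n : ℝ) * p n)) * ∑ k ∈ Finset.range (n + 1), (k : ℝ) * pTX k (n - k)

/-! ### Auxiliary definitions -/

noncomputable def Gm (m : ℕ) : ℝ :=
  ∫ a in (0:ℝ)..1, ∫ b in (0:ℝ)..1,
    a * (1 - a)^3 * (3 - (1 - a) * (3 - b))^m / (3 - (1 - a) * (2 - b))^(m+2)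

noncomputable def Hm (m : ℕ) : ℝ :=
  ∫ a in (0:ℝ)..1, ∫ b in (0:ℝ)..1,
    b * (1 - a)^4 * (3 - (1 - a) * (3 - b))^m / (3 - (1 - a) * (2 - b))^(m+2)

/-! ### pointwise bounds on the unit square -/

lemma hD1 {a b : ℝ} (h0a : 0 ≤ a) (h1a : a ≤ 1) (h0b : 0 ≤ b) (h1b : b ≤ 1) :
    1 ≤ 3 - (1 - a) * (2 - b) := by
  nlinarith [mul_nonneg h0a (show (0:ℝ) ≤ 1 - b by linarith)]

lemma hD3 {a b : ℝ} (h0a : 0 ≤ a) (h1a : a ≤ 1) (h0b : 0 ≤ b) (h1b : b ≤ 1) :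
    3 - (1 - a) * (2 - b) ≤ 3 := by
  nlinarith [mul_nonneg (show (0:ℝ) ≤ 1 - a by linarith) (show (0:ℝ) ≤ 2 - b by linarith)]

lemma hS0 {a b : ℝ} (h0a : 0 ≤ a) (h1a : a ≤ 1) (h0b : 0 ≤ b) (h1b : b ≤ 1) :
    0 ≤ 3 - (1 - a) * (3 - b) := by
  nlinarith [mul_le_mul (show (1:ℝ) - a ≤ 1 by linarith) (show (3:ℝ) - b ≤ 3 by linarith)
    (show (0:ℝ) ≤ 3 - b by linarith) (zero_le_one)]

lemma hS3 {a b : ℝ} (h0a : 0 ≤ a) (h1a : a ≤ 1) (h0b : 0 ≤ b) (h1b : b ≤ 1) :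
    3 - (1 - a) * (3 - b) ≤ 3 := by
  nlinarith [mul_nonneg (show (0:ℝ) ≤ 1 - a by linarith) (show (0:ℝ) ≤ 3 - b by linarith)]

/-! ### integrability helpers -/

lemma innerIntegrable {a : ℝ} (h0 : 0 ≤ a) (h1 : a ≤ 1) {g : ℝ → ℝ} (hg : Continuous g) (j : ℕ) :
    IntervalIntegrable (fun b => g b / (3 - (1 - a) * (2 - b)) ^ j) volume 0 1 := by
  apply ContinuousOn.intervalIntegrable
  apply ContinuousOn.div hg.continuousOn (by fun_prop)
  intro b hb
  rw [Set.uIcc_of_le (zero_le_one)] at hb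
  have hD : 1 ≤ 3 - (1 - a) * (2 - b) := hD1 h0 h1 hb.1 hb.2
  positivity

lemma boundDiv {N C D : ℝ} (hN0 : 0 ≤ N) (hNC : N ≤ C) (hD : 1 ≤ D) (j : ℕ) :
    |N / D ^ j| ≤ C := by
  rw [abs_of_nonneg (by positivity)]
  calc N / D ^ j ≤ N / 1 := by
        apply div_le_div_of_nonneg_left hN0 one_pos (one_le_pow₀ hD)
    _ = N := div_one N
    _ ≤ C := hNC

lemma paramIntegrable (f : ℝ → ℝ → ℝ)
    (hm : Measurable (fun p : ℝ × ℝ => f p.1 p.2)) (C : ℝ)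
    (hC : ∀ a ∈ Set.Ioc (0:ℝ) 1, ∀ b ∈ Set.Ioc (0:ℝ) 1, |f a b| ≤ C) :
    IntervalIntegrable (fun a => ∫ b in (0:ℝ)..1, f a b) volume 0 1 := by
  have hsm : StronglyMeasurable (fun p : ℝ × ℝ => f p.1 p.2) := hm.stronglyMeasurable
  have h1 : StronglyMeasurable
      (fun a => ∫ b, f a b ∂(volume.restrict (Set.Ioc (0:ℝ) 1))) :=
    hsm.integral_prod_right'
  have heq : (fun a => ∫ b in (0:ℝ)..1, f a b)
      = fun a => ∫ b, f a b ∂(volume.restrict (Set.Ioc (0:ℝ) 1)) := by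
    funext a
    rw [intervalIntegral.integral_of_le zero_le_one]
  rw [intervalIntegrable_iff, Set.uIoc_of_le zero_le_one]
  apply Measure.integrableOn_of_bounded (M := C)
  · simp
  · exact heq ▸ h1.aestronglyMeasurable
  · rw [ae_restrict_iff' measurableSet_Ioc]
    refine Filter.Eventually.of_forall (fun a ha => ?_)
    have := intervalIntegral.norm_integral_le_of_norm_le_const (C := C) (a := (0:ℝ)) (b := 1)
      (f := f a) (fun b hb => by
        rw [Set.uIoc_of_le zero_le_one] at hb
        simpa using hC a ha b hb)
    simpa using this

lemma paramG (m : ℕ) : IntervalIntegrable (fun a => ∫ b in (0:ℝ)..1,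
    a * (1 - a)^3 * (3 - (1 - a) * (3 - b))^m / (3 - (1 - a) * (2 - b))^(m+2))
    volume 0 1 := by
  apply paramIntegrable _ (by fun_prop) ((3:ℝ)^m)
  intro a ha b hb
  have hS := hS0 ha.1.le ha.2 hb.1.le hb.2
  apply boundDiv ?_ ?_ (hD1 ha.1.le ha.2 hb.1.le hb.2)
  · exact mul_nonneg (mul_nonneg ha.1.le
      (pow_nonneg (by linarith [ha.2]) 3)) (pow_nonneg hS m)
  · have e0 : (0:ℝ) ≤ (1-a)^3 := pow_nonneg (by linarith [ha.2]) 3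
    have e0' : (1-a)^3 ≤ 1 := pow_le_one₀ (by linarith [ha.2]) (by linarith [ha.1.le])
    have e1 : a * (1-a)^3 ≤ 1 := by nlinarith [ha.1.le, ha.2]
    have h2 : (3 - (1 - a) * (3 - b))^m ≤ 3^m :=
      pow_le_pow_left₀ hS (hS3 ha.1.le ha.2 hb.1.le hb.2) m
    have h3 : (0:ℝ) ≤ (3 - (1 - a) * (3 - b))^m := pow_nonneg hS m
    calc a * (1-a)^3 * (3 - (1 - a) * (3 - b))^m ≤ 1 * 3^m :=
          mul_le_mul e1 h2 h3 zero_le_one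
      _ = 3^m := one_mul _

lemma paramH (m : ℕ) : IntervalIntegrable (fun a => ∫ b in (0:ℝ)..1,
    b * (1 - a)^4 * (3 - (1 - a) * (3 - b))^m / (3 - (1 - a) * (2 - b))^(m+2))
    volume 0 1 := by
  apply paramIntegrable _ (by fun_prop) ((3:ℝ)^m)
  intro a ha b hb
  have hS := hS0 ha.1.le ha.2 hb.1.le hb.2
  apply boundDiv ?_ ?_ (hD1 ha.1.le ha.2 hb.1.le hb.2)
  · exact mul_nonneg (mul_nonneg hb.1.le
      (pow_nonneg (by linarith [ha.2]) 4)) (pow_nonneg hS m)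
  · have e0 : (0:ℝ) ≤ (1-a)^4 := pow_nonneg (by linarith [ha.2]) 4
    have e0' : (1-a)^4 ≤ 1 := pow_le_one₀ (by linarith [ha.2]) (by linarith [ha.1.le])
    have e1 : b * (1-a)^4 ≤ 1 := by nlinarith [hb.1.le, hb.2]
    have h2 : (3 - (1 - a) * (3 - b))^m ≤ 3^m :=
      pow_le_pow_left₀ hS (hS3 ha.1.le ha.2 hb.1.le hb.2) m
    have h3 : (0:ℝ) ≤ (3 - (1 - a) * (3 - b))^m := pow_nonneg hS m
    calc b * (1-a)^4 * (3 - (1 - a) * (3 - b))^m ≤ 1 * 3^m :=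
          mul_le_mul e1 h2 h3 zero_le_one
      _ = 3^m := one_mul _

lemma paramTX (n k : ℕ) (c : ℝ) (hc : 0 ≤ c) :
    IntervalIntegrable (fun a => ∫ b in (0:ℝ)..1,
      c * ((1 - a)^3 * a^k * (1 - (1 - a) * (1 - b))^(n-k) / (3 - (1 - a) * (2 - b))^(n+1)))
    volume 0 1 := by
  apply paramIntegrable _ (by fun_prop) c
  intro a ha b hb
  rw [abs_mul, abs_of_nonneg hc]
  have h1a : (0:ℝ) ≤ 1 - a := by linarith [ha.2]
  have h1b : (0:ℝ) ≤ 1 - b := by linarith [hb.2]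
  have hY : (0:ℝ) ≤ 1 - (1 - a) * (1 - b) := by
    nlinarith [mul_nonneg ha.1.le h1b, hb.1.le]
  have hb1 : |(1 - a)^3 * a^k * (1 - (1 - a) * (1 - b))^(n-k)
      / (3 - (1 - a) * (2 - b))^(n+1)| ≤ 1 := by
    apply boundDiv ?_ ?_ (hD1 ha.1.le ha.2 hb.1.le hb.2)
    · exact mul_nonneg (mul_nonneg (pow_nonneg h1a 3) (pow_nonneg ha.1.le k))
        (pow_nonneg hY _)
    · have e1 : (1-a)^3 ≤ 1 := pow_le_one₀ h1a (by linarith [ha.1.le])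
      have e2 : a^k ≤ 1 := pow_le_one₀ ha.1.le ha.2
      have e3 : (1 - (1 - a) * (1 - b))^(n-k) ≤ 1 :=
        pow_le_one₀ hY (by nlinarith [mul_nonneg h1a h1b])
      have p1 : (0:ℝ) ≤ (1-a)^3 := pow_nonneg h1a 3
      have p2 : (0:ℝ) ≤ a^k := pow_nonneg ha.1.le k
      have p3 : (0:ℝ) ≤ (1 - (1 - a) * (1 - b))^(n-k) := pow_nonneg hY _
      calc (1-a)^3 * a^k * (1 - (1 - a) * (1 - b))^(n-k) ≤ 1 * 1 * 1 := by
            apply mul_le_mul (mul_le_mul e1 e2 p2 (by linarith)) e3 p3 (by norm_num)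
        _ = 1 := by norm_num
  exact mul_le_of_le_one_right hc hb1

/-! ### the binomial identity -/

lemma sum_k_choose (n : ℕ) (x y : ℝ) :
    ∑ k ∈ range (n + 1), (k : ℝ) * (Nat.choose n k : ℝ) * x ^ k * y ^ (n - k)
      = n * x * (x + y) ^ (n - 1) := by
  cases n with
  | zero => simp
  | succ m =>
    rw [Finset.sum_range_succ']
    simp only [Nat.cast_zero, zero_mul, pow_zero, add_zero, Nat.succ_sub_succ,
      Nat.add_sub_cancel, Nat.sub_zero, Nat.cast_add, Nat.cast_one]
    have step : ∀ j ∈ range (m+1),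
        ((j:ℝ)+1) * (Nat.choose (m+1) (j+1) : ℝ) * x ^ (j+1) * y ^ (m - j)
          = ((m:ℝ)+1) * x * (x ^ j * y ^ (m - j) * (Nat.choose m j : ℝ)) := by
      intro j _
      have h := congrArg (fun k : ℕ => (k : ℝ)) (Nat.add_one_mul_choose_eq m j)
      push_cast at h
      linear_combination (-(x ^ (j+1)) * y ^ (m - j)) * h
    rw [Finset.sum_congr rfl step, ← Finset.mul_sum, add_pow]

lemma sum_pointwise (n : ℕ) (a b : ℝ) :
    ∑ k ∈ range (n+1), ((k:ℝ) * (3 * 2^k * (Nat.choose n k : ℝ))) *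
      ((1-a)^3 * a^k * (1-(1-a)*(1-b))^(n-k) / (3-(1-a)*(2-b))^(n+1))
    = 6 * (n:ℝ) * (a * (1-a)^3 * (3-(1-a)*(3-b))^(n-1) / (3-(1-a)*(2-b))^(n+1)) := by
  have key := sum_k_choose n (2*a) (1-(1-a)*(1-b))
  have h2 : (2*a) + (1-(1-a)*(1-b)) = 3-(1-a)*(3-b) := by ring
  rw [h2] at key
  have congrstep : ∀ k ∈ range (n+1),
      ((k:ℝ) * (3 * 2^k * (Nat.choose n k : ℝ))) *
        ((1-a)^3 * a^k * (1-(1-a)*(1-b))^(n-k) / (3-(1-a)*(2-b))^(n+1))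
      = (3*(1-a)^3/(3-(1-a)*(2-b))^(n+1)) *
        ((k:ℝ) * (Nat.choose n k : ℝ) * (2*a)^k * (1-(1-a)*(1-b))^(n-k)) := by
    intro k _
    rw [mul_pow]
    ring
  rw [Finset.sum_congr rfl congrstep, ← Finset.mul_sum, key]
  ring

/-! ### the reduction lemmas -/

lemma step_k (n k : ℕ) (hk : k ≤ n) :
    (k:ℝ) * pTX k (n-k) = ∫ a in (0:ℝ)..1, ∫ b in (0:ℝ)..1,
      ((k:ℝ) * (3 * 2^k * (Nat.choose n k : ℝ))) *
        ((1-a)^3 * a^k * (1-(1-a)*(1-b))^(n-k) / (3-(1-a)*(2-b))^(n+1)) := by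
  unfold pTX
  rw [Nat.add_sub_cancel' hk, ← mul_assoc, ← intervalIntegral.integral_const_mul]
  congr 1
  funext a
  exact (intervalIntegral.integral_const_mul _ _).symm

lemma sum_eq (m : ℕ) :
    ∑ k ∈ range (m+1+1), (k:ℝ) * pTX k (m+1-k)
      = 6 * ((m:ℝ)+1) * Gm m := by
  have hstep : ∀ k ∈ range (m+1+1), (k:ℝ) * pTX k (m+1-k)
      = ∫ a in (0:ℝ)..1, ∫ b in (0:ℝ)..1,
        ((k:ℝ) * (3 * 2^k * (Nat.choose (m+1) k : ℝ))) *
          ((1-a)^3 * a^k * (1-(1-a)*(1-b))^(m+1-k) / (3-(1-a)*(2-b))^(m+1+1)) := by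
    intro k hk
    exact step_k (m+1) k (Nat.lt_succ_iff.mp (Finset.mem_range.mp hk))
  have hInt : ∀ k ∈ range (m+1+1), IntervalIntegrable (fun a => ∫ b in (0:ℝ)..1,
      ((k:ℝ) * (3 * 2^k * (Nat.choose (m+1) k : ℝ))) *
        ((1-a)^3 * a^k * (1-(1-a)*(1-b))^(m+1-k) / (3-(1-a)*(2-b))^(m+1+1)))
      volume 0 1 :=
    fun k _ => paramTX (m+1) k _ (by positivity)
  have hout : Set.EqOn
      (fun a => ∑ k ∈ range (m+1+1), ∫ b in (0:ℝ)..1,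
        ((k:ℝ) * (3 * 2^k * (Nat.choose (m+1) k : ℝ))) *
          ((1-a)^3 * a^k * (1-(1-a)*(1-b))^(m+1-k) / (3-(1-a)*(2-b))^(m+1+1)))
      (fun a => ∫ b in (0:ℝ)..1,
        6 * ((m+1:ℕ):ℝ) * (a * (1-a)^3 * (3-(1-a)*(3-b))^(m+1-1) / (3-(1-a)*(2-b))^(m+1+1)))
      (Set.uIcc 0 1) := by
    intro a ha
    rw [Set.uIcc_of_le zero_le_one] at ha
    have hInner : ∀ k ∈ range (m+1+1), IntervalIntegrable (fun b =>
        ((k:ℝ) * (3 * 2^k * (Nat.choose (m+1) k : ℝ))) *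
          ((1-a)^3 * a^k * (1-(1-a)*(1-b))^(m+1-k) / (3-(1-a)*(2-b))^(m+1+1)))
        volume 0 1 :=
      fun k _ => (innerIntegrable ha.1 ha.2
        (g := fun b => (1-a)^3 * a^k * (1-(1-a)*(1-b))^(m+1-k))
        (by fun_prop) (m+1+1)).const_mul _
    show (∑ k ∈ range (m+1+1), ∫ b in (0:ℝ)..1,
        ((k:ℝ) * (3 * 2^k * (Nat.choose (m+1) k : ℝ))) *
          ((1-a)^3 * a^k * (1-(1-a)*(1-b))^(m+1-k) / (3-(1-a)*(2-b))^(m+1+1))) = _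
    refine ((intervalIntegral.integral_finset_sum hInner).symm).trans ?_
    congr 1
    funext b
    exact sum_pointwise (m+1) a b
  calc ∑ k ∈ range (m+1+1), (k:ℝ) * pTX k (m+1-k)
      = ∑ k ∈ range (m+1+1), ∫ a in (0:ℝ)..1, ∫ b in (0:ℝ)..1,
          ((k:ℝ) * (3 * 2^k * (Nat.choose (m+1) k : ℝ))) *
            ((1-a)^3 * a^k * (1-(1-a)*(1-b))^(m+1-k) / (3-(1-a)*(2-b))^(m+1+1)) :=
        Finset.sum_congr rfl hstep
    _ = ∫ a in (0:ℝ)..1, ∑ k ∈ range (m+1+1), ∫ b in (0:ℝ)..1,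
          ((k:ℝ) * (3 * 2^k * (Nat.choose (m+1) k : ℝ))) *
            ((1-a)^3 * a^k * (1-(1-a)*(1-b))^(m+1-k) / (3-(1-a)*(2-b))^(m+1+1)) :=
        (intervalIntegral.integral_finset_sum hInt).symm
    _ = ∫ a in (0:ℝ)..1, ∫ b in (0:ℝ)..1,
          6 * ((m+1:ℕ):ℝ) * (a * (1-a)^3 * (3-(1-a)*(3-b))^(m+1-1)
            / (3-(1-a)*(2-b))^(m+1+1)) :=
        intervalIntegral.integral_congr hout
    _ = 6 * ((m:ℝ)+1) * Gm m := by
        simp only [Nat.add_sub_cancel, intervalIntegral.integral_const_mul]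
        have h2 : m + 1 + 1 = m + 2 := rfl
        rw [h2]
        unfold Gm
        push_cast
        ring

lemma p_eq (m : ℕ) : p (m+1) = 9 * Gm m + 3 * Hm m := by
  have point : ∀ a b : ℝ, (1-a)^3 * (3-(1-a)*(3-b))^(m+1) / (3-(1-a)*(2-b))^(m+1+1)
      = 3 * (a * (1-a)^3 * (3-(1-a)*(3-b))^m / (3-(1-a)*(2-b))^(m+2))
        + b * (1-a)^4 * (3-(1-a)*(3-b))^m / (3-(1-a)*(2-b))^(m+2) := by
    intro a b
    rw [pow_succ]
    have h22 : m + 1 + 1 = m + 2 := rfl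
    rw [h22]
    ring
  unfold p
  have hout : Set.EqOn
      (fun a => ∫ b in (0:ℝ)..1,
        (1-a)^3 * (3-(1-a)*(3-b))^(m+1) / (3-(1-a)*(2-b))^(m+1+1))
      (fun a => 3 * (∫ b in (0:ℝ)..1,
          a * (1-a)^3 * (3-(1-a)*(3-b))^m / (3-(1-a)*(2-b))^(m+2))
        + ∫ b in (0:ℝ)..1,
          b * (1-a)^4 * (3-(1-a)*(3-b))^m / (3-(1-a)*(2-b))^(m+2))
      (Set.uIcc 0 1) := by
    intro a ha
    rw [Set.uIcc_of_le zero_le_one] at ha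
    simp only [point]
    rw [intervalIntegral.integral_add
      ((innerIntegrable ha.1 ha.2
        (g := fun b => a * (1-a)^3 * (3-(1-a)*(3-b))^m) (by fun_prop) (m+2)).const_mul 3)
      (innerIntegrable ha.1 ha.2 (g := fun b => b * (1-a)^4 * (3-(1-a)*(3-b))^m)
        (by fun_prop) (m+2)),
      intervalIntegral.integral_const_mul]
  rw [intervalIntegral.integral_congr hout,
    intervalIntegral.integral_add ((paramG m).const_mul 3) (paramH m),
    intervalIntegral.integral_const_mul]
  show (3:ℝ) * (3 * Gm m + Hm m) = 9 * Gm m + 3 * Hm m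
  ring

/-! ### polynomial integrals -/

lemma int_mono5 (m : ℕ) (c0 c1 c2 c3 c4 : ℝ) :
    ∫ x in (0:ℝ)..1, (c0*x^m + c1*x^(m+1) + c2*x^(m+2) + c3*x^(m+3) + c4*x^(m+4))
      = c0/(m+1) + c1/(m+2) + c2/(m+3) + c3/(m+4) + c4/(m+5) := by
  have Ii : ∀ (k : ℕ) (c : ℝ), IntervalIntegrable (fun x : ℝ => c*x^k) volume 0 1 :=
    fun k c => Continuous.intervalIntegrable (by fun_prop) _ _
  have I : ∀ (k : ℕ) (c : ℝ), (∫ x in (0:ℝ)..1, c * x^k) = c/((k:ℝ)+1) := by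
    intro k c
    rw [intervalIntegral.integral_const_mul, integral_pow]
    norm_num [div_eq_mul_inv]
  rw [intervalIntegral.integral_add (((((Ii m c0).add (Ii (m+1) c1)).add
      (Ii (m+2) c2)).add (Ii (m+3) c3))) (Ii (m+4) c4),
    intervalIntegral.integral_add ((((Ii m c0).add (Ii (m+1) c1)).add
      (Ii (m+2) c2))) (Ii (m+3) c3),
    intervalIntegral.integral_add (((Ii m c0).add (Ii (m+1) c1))) (Ii (m+2) c2),
    intervalIntegral.integral_add ((Ii m c0)) (Ii (m+1) c1),
    I, I, I, I, I]
  push_cast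
  ring

/-! ### lower bound for Gm -/

lemma J1val (m : ℕ) : (∫ x in (0:ℝ)..1, x^(m+1) * (1-x)^3)
    = 6/(((m:ℝ)+2)*((m:ℝ)+3)*((m:ℝ)+4)*((m:ℝ)+5)) := by
  have h : (fun x : ℝ => x^(m+1) * (1-x)^3)
      = fun x : ℝ => (1*x^(m+1) + (-3)*x^(m+1+1) + 3*x^(m+1+2) + (-1)*x^(m+1+3)
          + 0*x^(m+1+4)) := by
    funext x; ring
  rw [h, int_mono5 (m+1) 1 (-3) 3 (-1) 0]
  have h2 : (0:ℝ) < (m:ℝ)+2 := by positivity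
  have h3 : (0:ℝ) < (m:ℝ)+3 := by positivity
  have h4 : (0:ℝ) < (m:ℝ)+4 := by positivity
  have h5 : (0:ℝ) < (m:ℝ)+5 := by positivity
  have h6 : (0:ℝ) < (m:ℝ)+6 := by positivity
  push_cast
  field_simp
  ring

lemma G_lower (m : ℕ) :
    (2/3) / (((m:ℝ)+2)*((m:ℝ)+3)*((m:ℝ)+4)*((m:ℝ)+5)) ≤ Gm m := by
  have pt : ∀ a ∈ Set.Icc (0:ℝ) 1, ∀ b ∈ Set.Icc (0:ℝ) 1,
      a^(m+1) * (1-a)^3 / 9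
        ≤ a * (1-a)^3 * (3-(1-a)*(3-b))^m / (3-(1-a)*(2-b))^(m+2) := by
    intro a ha b hb
    have hD1' := hD1 ha.1 ha.2 hb.1 hb.2
    have hD3' := hD3 ha.1 ha.2 hb.1 hb.2
    have hS0' := hS0 ha.1 ha.2 hb.1 hb.2
    have h3a : (0:ℝ) ≤ 3*a := by linarith [ha.1]
    have hSa : 3*a ≤ 3-(1-a)*(3-b) := by nlinarith [mul_nonneg (show (0:ℝ) ≤ 1-a by linarith [ha.2]) hb.1]
    have key : (3*a)^m / 3^(m+2) ≤ (3-(1-a)*(3-b))^m / (3-(1-a)*(2-b))^(m+2) :=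
      div_le_div₀ (pow_nonneg hS0' m) (pow_le_pow_left₀ h3a hSa m)
        (pow_pos (by linarith) (m+2)) (pow_le_pow_left₀ (by linarith) hD3' (m+2))
    have heq : a^(m+1) * (1-a)^3 / 9 = (a * (1-a)^3) * ((3*a)^m / 3^(m+2)) := by
      have h9 : (3:ℝ)^m ≠ 0 := by positivity
      rw [mul_pow, pow_add]
      field_simp
      ring
    rw [heq, mul_div_assoc]
    exact mul_le_mul_of_nonneg_left key
      (mul_nonneg ha.1 (pow_nonneg (by linarith [ha.2]) 3))
  have inner_ge : ∀ a ∈ Set.Icc (0:ℝ) 1, a^(m+1) * (1-a)^3 / 9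
      ≤ ∫ b in (0:ℝ)..1,
        a * (1-a)^3 * (3-(1-a)*(3-b))^m / (3-(1-a)*(2-b))^(m+2) := by
    intro a ha
    have hc : (∫ _ in (0:ℝ)..1, a^(m+1) * (1-a)^3 / 9) = a^(m+1) * (1-a)^3 / 9 := by
      simp
    rw [← hc]
    apply intervalIntegral.integral_mono_on zero_le_one
      (intervalIntegrable_const)
      (innerIntegrable ha.1 ha.2
        (g := fun b => a * (1-a)^3 * (3-(1-a)*(3-b))^m) (by fun_prop) (m+2))
    exact fun b hb => pt a ha b hb
  have outer : (∫ a in (0:ℝ)..1, a^(m+1) * (1-a)^3 / 9) ≤ Gm m := by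
    unfold Gm
    apply intervalIntegral.integral_mono_on zero_le_one
      (Continuous.intervalIntegrable (by fun_prop) _ _) (paramG m)
    exact inner_ge
  have hval : (∫ a in (0:ℝ)..1, a^(m+1) * (1-a)^3 / 9)
      = (2/3) / (((m:ℝ)+2)*((m:ℝ)+3)*((m:ℝ)+4)*((m:ℝ)+5)) := by
    have h : (fun a : ℝ => a^(m+1) * (1-a)^3 / 9)
        = fun a : ℝ => (1/9) * (a^(m+1) * (1-a)^3) := by
      funext x; ring
    rw [h, intervalIntegral.integral_const_mul, J1val]
    have h2 : (0:ℝ) < (m:ℝ)+2 := by positivity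
    have h3 : (0:ℝ) < (m:ℝ)+3 := by positivity
    have h4 : (0:ℝ) < (m:ℝ)+4 := by positivity
    have h5 : (0:ℝ) < (m:ℝ)+5 := by positivity
    field_simp
    ring
  linarith [outer, hval.ge]

lemma G_pos (m : ℕ) : 0 < Gm m := by
  have := G_lower m
  have hp : (0:ℝ) < (2/3) / (((m:ℝ)+2)*((m:ℝ)+3)*((m:ℝ)+4)*((m:ℝ)+5)) := by positivity
  linarith

/-! ### upper bound for Hm -/

lemma H_nonneg (m : ℕ) : 0 ≤ Hm m := by
  unfold Hm
  apply intervalIntegral.integral_nonneg zero_le_one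
  intro a ha
  apply intervalIntegral.integral_nonneg zero_le_one
  intro b hb
  have hS0' := hS0 ha.1 ha.2 hb.1 hb.2
  have hD1' := hD1 ha.1 ha.2 hb.1 hb.2
  exact div_nonneg (mul_nonneg (mul_nonneg hb.1
    (pow_nonneg (by linarith [ha.2]) 4)) (pow_nonneg hS0' m))
    (pow_nonneg (by linarith) (m+2))

noncomputable def phi (m : ℕ) (u : ℝ) : ℝ := (3-3*u)^4 * u^m

lemma H_upper (m : ℕ) : Hm m ≤ 5832 /
    (((m:ℝ)+1)*((m:ℝ)+2)*((m:ℝ)+3)*((m:ℝ)+4)*((m:ℝ)+5)) := by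
  have pt : ∀ a ∈ Set.Icc (0:ℝ) 1, ∀ b ∈ Set.Icc (0:ℝ) 1,
      b * (1-a)^4 * (3-(1-a)*(3-b))^m / (3-(1-a)*(2-b))^(m+2)
        ≤ phi m ((1/3)*a + 2/3) := by
    intro a ha b hb
    have hD1' := hD1 ha.1 ha.2 hb.1 hb.2
    have hD3' := hD3 ha.1 ha.2 hb.1 hb.2
    have hS0' := hS0 ha.1 ha.2 hb.1 hb.2
    have hDp : (0:ℝ) < 3-(1-a)*(2-b) := by linarith
    have h1a : (0:ℝ) ≤ 1-a := by linarith [ha.2]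
    have hKeq : phi m ((1/3)*a + 2/3) = (1-a)^4 * ((2+a)/3)^m := by
      unfold phi; ring
    rw [hKeq]
    have step1 : b * (1-a)^4 * (3-(1-a)*(3-b))^m / (3-(1-a)*(2-b))^(m+2)
        ≤ (1-a)^4 * (3-(1-a)*(3-b))^m / (3-(1-a)*(2-b))^(m+2) := by
      apply div_le_div₀ (mul_nonneg (pow_nonneg h1a 4) (pow_nonneg hS0' m)) ?_
        (pow_pos hDp (m+2)) le_rfl
      nlinarith [mul_nonneg (pow_nonneg h1a 4) (pow_nonneg hS0' m), hb.2, hb.1]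
    have hfrac : (3-(1-a)*(3-b)) / (3-(1-a)*(2-b)) ≤ (2+a)/3 := by
      rw [div_le_div_iff₀ hDp (by norm_num : (0:ℝ) < 3)]
      nlinarith [mul_nonneg (mul_self_nonneg (1-a)) (show (0:ℝ) ≤ 2-b by linarith [hb.2])]
    have step2 : (1-a)^4 * (3-(1-a)*(3-b))^m / (3-(1-a)*(2-b))^(m+2)
        ≤ (1-a)^4 * ((2+a)/3)^m := by
      rw [mul_div_assoc]
      apply mul_le_mul_of_nonneg_left ?_ (pow_nonneg h1a 4)
      calc (3-(1-a)*(3-b))^m / (3-(1-a)*(2-b))^(m+2)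
          ≤ (3-(1-a)*(3-b))^m / (3-(1-a)*(2-b))^m :=
            div_le_div_of_nonneg_left (pow_nonneg hS0' m) (pow_pos hDp m)
              (pow_le_pow_right₀ hD1' (by omega))
        _ = ((3-(1-a)*(3-b)) / (3-(1-a)*(2-b)))^m := (div_pow _ _ m).symm
        _ ≤ ((2+a)/3)^m := pow_le_pow_left₀ (div_nonneg hS0' hDp.le) hfrac m
    linarith
  have inner_le : ∀ a ∈ Set.Icc (0:ℝ) 1,
      (∫ b in (0:ℝ)..1, b * (1-a)^4 * (3-(1-a)*(3-b))^m / (3-(1-a)*(2-b))^(m+2))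
        ≤ phi m ((1/3)*a + 2/3) := by
    intro a ha
    have hc : (∫ _ in (0:ℝ)..1, phi m ((1/3)*a + 2/3)) = phi m ((1/3)*a + 2/3) := by
      simp
    rw [← hc]
    apply intervalIntegral.integral_mono_on zero_le_one
      (innerIntegrable ha.1 ha.2
        (g := fun b => b * (1-a)^4 * (3-(1-a)*(3-b))^m) (by fun_prop) (m+2))
      intervalIntegrable_const
    exact fun b hb => pt a ha b hb
  have hphi_cont : Continuous (phi m) := by unfold phi; fun_prop
  have outer : Hm m ≤ ∫ a in (0:ℝ)..1, phi m ((1/3)*a + 2/3) := by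
    unfold Hm
    apply intervalIntegral.integral_mono_on zero_le_one (paramH m)
      (Continuous.intervalIntegrable (by fun_prop) _ _)
    exact inner_le
  have hcomp : (∫ a in (0:ℝ)..1, phi m ((1/3)*a + 2/3))
      = 3 * ∫ u in (2/3:ℝ)..1, phi m u := by
    rw [intervalIntegral.integral_comp_mul_add (f := phi m)
      (by norm_num : (1/3:ℝ) ≠ 0) (2/3)]
    norm_num
  have hmono : (∫ u in (2/3:ℝ)..1, phi m u) ≤ ∫ u in (0:ℝ)..1, phi m u := by
    have hadj : (∫ u in (0:ℝ)..(2/3), phi m u) + (∫ u in (2/3:ℝ)..1, phi m u)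
        = ∫ u in (0:ℝ)..1, phi m u :=
      intervalIntegral.integral_add_adjacent_intervals
        (hphi_cont.intervalIntegrable _ _) (hphi_cont.intervalIntegrable _ _)
    have h0 : 0 ≤ ∫ u in (0:ℝ)..(2/3), phi m u := by
      apply intervalIntegral.integral_nonneg (by norm_num)
      intro u hu
      unfold phi
      have := hu.1
      positivity
    linarith
  have hval : (∫ u in (0:ℝ)..1, phi m u)
      = 81/((m:ℝ)+1) + (-324)/((m:ℝ)+2) + 486/((m:ℝ)+3) + (-324)/((m:ℝ)+4)
        + 81/((m:ℝ)+5) := by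
    have h : (fun u : ℝ => phi m u) = fun u : ℝ =>
        (81*u^m + (-324)*u^(m+1) + 486*u^(m+2) + (-324)*u^(m+3) + 81*u^(m+4)) := by
      funext u; unfold phi; ring
    rw [h, int_mono5]
  have hfin : 3 * (81/((m:ℝ)+1) + (-324)/((m:ℝ)+2) + 486/((m:ℝ)+3) + (-324)/((m:ℝ)+4)
        + 81/((m:ℝ)+5))
      = 5832 / (((m:ℝ)+1)*((m:ℝ)+2)*((m:ℝ)+3)*((m:ℝ)+4)*((m:ℝ)+5)) := by
    have h1 : (0:ℝ) < (m:ℝ)+1 := by positivity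
    have h2 : (0:ℝ) < (m:ℝ)+2 := by positivity
    have h3 : (0:ℝ) < (m:ℝ)+3 := by positivity
    have h4 : (0:ℝ) < (m:ℝ)+4 := by positivity
    have h5 : (0:ℝ) < (m:ℝ)+5 := by positivity
    field_simp
    ring
  calc Hm m ≤ ∫ a in (0:ℝ)..1, phi m ((1/3)*a + 2/3) := outer
    _ = 3 * ∫ u in (2/3:ℝ)..1, phi m u := hcomp
    _ ≤ 3 * ∫ u in (0:ℝ)..1, phi m u := by linarith
    _ = 5832 / (((m:ℝ)+1)*((m:ℝ)+2)*((m:ℝ)+3)*((m:ℝ)+4)*((m:ℝ)+5)) := by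
        rw [hval]; exact hfin

/-! ### assembly -/

lemma pTgiven_eq (m : ℕ) : pTgiven (m+1) = 2 * Gm m / (3 * Gm m + Hm m) := by
  have hG := G_pos m
  have hH := H_nonneg m
  unfold pTgiven
  rw [sum_eq m, p_eq m]
  have h1 : ((m+1:ℕ):ℝ) ≠ 0 := by positivity
  have h2 : 9 * Gm m + 3 * Hm m ≠ 0 := by linarith
  have h3 : 3 * Gm m + Hm m ≠ 0 := by linarith
  push_cast
  field_simp
  ring

lemma est (m : ℕ) : |pTgiven (m+1) - 2/3| ≤ 1944 / ((m:ℝ)+1) := by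
  have hG := G_pos m
  have hH0 := H_nonneg m
  have hGl := G_lower m
  have hHu := H_upper m
  have hden : (0:ℝ) < 3 * Gm m + Hm m := by linarith
  have hval : pTgiven (m+1) - 2/3 = -(2 * Hm m / (3 * (3 * Gm m + Hm m))) := by
    rw [pTgiven_eq m]
    field_simp
    ring
  rw [hval, abs_neg, abs_of_nonneg (by positivity)]
  have hP : (0:ℝ) < ((m:ℝ)+2)*((m:ℝ)+3)*((m:ℝ)+4)*((m:ℝ)+5) := by positivity
  have step1 : 2 * Hm m / (3 * (3 * Gm m + Hm m)) ≤ 2 * Hm m / (9 * Gm m) := by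
    apply div_le_div_of_nonneg_left (by linarith) (by linarith) (by linarith)
  have step2 : 2 * Hm m / (9 * Gm m)
      ≤ 2 * (5832 / (((m:ℝ)+1)*((m:ℝ)+2)*((m:ℝ)+3)*((m:ℝ)+4)*((m:ℝ)+5)))
        / (9 * ((2/3) / (((m:ℝ)+2)*((m:ℝ)+3)*((m:ℝ)+4)*((m:ℝ)+5)))) := by
    apply div_le_div₀ (by positivity) (by linarith) (by positivity) (by linarith)
  have step3 : 2 * (5832 / (((m:ℝ)+1)*((m:ℝ)+2)*((m:ℝ)+3)*((m:ℝ)+4)*((m:ℝ)+5)))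
        / (9 * ((2/3) / (((m:ℝ)+2)*((m:ℝ)+3)*((m:ℝ)+4)*((m:ℝ)+5))))
      = 1944 / ((m:ℝ)+1) := by
    have h1 : (0:ℝ) < (m:ℝ)+1 := by positivity
    have h2 : (0:ℝ) < (m:ℝ)+2 := by positivity
    have h3 : (0:ℝ) < (m:ℝ)+3 := by positivity
    have h4 : (0:ℝ) < (m:ℝ)+4 := by positivity
    have h5 : (0:ℝ) < (m:ℝ)+5 := by positivity
    field_simp
    ring
  linarith

theorem stit_pTgiven_limit :
    Filter.Tendsto pTgiven Filter.atTop (nhds (2/3)) := by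
  have key : ∀ n : ℕ, 1 ≤ n → ‖pTgiven n - 2/3‖ ≤ 1944 / (n:ℝ) := by
    intro n hn
    obtain ⟨m, rfl⟩ : ∃ m, n = m + 1 := ⟨n - 1, (Nat.succ_pred_eq_of_pos hn).symm⟩
    rw [Real.norm_eq_abs]
    have := est m
    push_cast
    linarith
  have h0 : Filter.Tendsto (fun n : ℕ => (1944:ℝ) / n) Filter.atTop (nhds 0) :=
    tendsto_const_div_atTop_nhds_zero_nat 1944
  have h1 : Filter.Tendsto (fun n : ℕ => pTgiven n - 2/3) Filter.atTop (nhds 0) := by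
    apply squeeze_zero_norm' _ h0
    exact Filter.eventually_atTop.2 ⟨1, fun n hn => key n hn⟩
  have h2 := h1.add_const (2/3)
  simpa using h2
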